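/- Let G be a connected graph on n vertices with a JL-coloring. If |E(G)| ≥ 2(n-1), then at least one color class has size exactly 1; consequently the bound |R(G,φ)| ≤ ∏ aᵢ (where a₁,…,a_{n-1} are the near-equal integer parts of |E(G)|, each ≥ 2) is strict. -/

import Mathlib

open SimpleGraph Finset

/-- `T` is the edge set of a spanning tree of `G`: its edges lie in `G`, and the graph
formed by these edges is connected (hence spanning) and acyclic. -/
def IsSpanningTreeEdges {V : Type*} (G : SimpleGraph V) (T : Finset (Sym2 V)) : Prop :=
  ↑T ⊆ G.edgeSet ∧ (SimpleGraph.fromEdgeSet (↑T : Set (Sym2 V))).Connected ∧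
    (SimpleGraph.fromEdgeSet (↑T : Set (Sym2 V))).IsAcyclic

/-- An edge set is rainbow under a coloring `φ` if all its edges receive distinct colors. -/
def IsRainbow {V : Type*} {k : ℕ} (φ : Sym2 V → Fin k) (T : Finset (Sym2 V)) : Prop :=
  Set.InjOn φ ↑T

/-- `G` has a rainbow cycle under `φ`: a cycle whose edges receive pairwise distinct colors. -/
def HasRainbowCycle {V : Type*} {k : ℕ} (G : SimpleGraph V) (φ : Sym2 V → Fin k) : Prop :=
  ∃ (v : V) (c : G.Walk v v), c.IsCycle ∧ Set.InjOn φ {e | e ∈ c.edges}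

/-- `φ` is a JL-coloring of `G`: every one of the `k` colors appears on some edge of `G`
(surjectivity onto the colors) and there is no rainbow cycle. -/
def IsJLColoring {V : Type*} {k : ℕ} (G : SimpleGraph V) (φ : Sym2 V → Fin k) : Prop :=
  (∀ c : Fin k, ∃ e ∈ G.edgeSet, φ e = c) ∧ ¬ HasRainbowCycle G φ

/-- The number of rainbow spanning trees of `G` under the edge coloring `φ`. -/
noncomputable def numRST {V : Type*} {k : ℕ} (G : SimpleGraph V) (φ : Sym2 V → Fin k) : ℕ :=
  Nat.card {T : Finset (Sym2 V) // IsSpanningTreeEdges G T ∧ IsRainbow φ T}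


section JLProofAux

variable {V : Type*}

lemma jl_mod_succ {t d : ℕ} (h2 : 2 ≤ d) (h : t % d < d - 1) : (t + 1) % d = t % d + 1 := by
  conv_lhs => rw [← Nat.mod_add_div t d]
  have e1 : t % d + d * (t / d) + 1 = (t % d + 1) + d * (t / d) := by ring
  rw [e1, Nat.add_mul_mod_self_left, Nat.mod_eq_of_lt (by omega)]

lemma jl_mod_succ_zero {t d : ℕ} (h2 : 2 ≤ d) (h : t % d = d - 1) : (t + 1) % d = 0 := by
  conv_lhs => rw [← Nat.mod_add_div t d]
  have e1 : t % d + d * (t / d) + 1 = (t % d + 1) + d * (t / d) := by ring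
  rw [e1, Nat.add_mul_mod_self_left, h]
  have e2 : d - 1 + 1 = d := by omega
  rw [e2, Nat.mod_self]


lemma jl_edge_head {G : SimpleGraph V} {u b v w : V} {h : G.Adj u b} {q : G.Walk b v}
    (hp : (SimpleGraph.Walk.cons h q).IsPath) (he : s(u, w) ∈ (SimpleGraph.Walk.cons h q).edges) :
    w = b := by
  rw [SimpleGraph.Walk.edges_cons, List.mem_cons] at he
  rcases he with he | he
  · rcases Sym2.eq_iff.mp he with ⟨-, rfl⟩ | ⟨rfl, rfl⟩
    · rfl
    · exact absurd rfl h.ne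
  · exfalso
    have hu : u ∈ q.support := q.fst_mem_support_of_mem_edges he
    rw [SimpleGraph.Walk.cons_isPath_iff] at hp
    exact hp.2 hu

lemma jl_acyclic_mono {H1 H2 : SimpleGraph V} (h : H1 ≤ H2) (h2 : H2.IsAcyclic) :
    H1.IsAcyclic := by
  intro v c hc
  exact h2 (c.transfer H2 (fun e he => (SimpleGraph.edgeSet_mono h) (c.edges_subset_edgeSet he)))
    (hc.transfer _)

/-- Core lemma: a nonempty acyclic edge set has a vertex of "degree" one. -/
lemma jl_exists_leaf [Fintype V] [DecidableEq V] {R : Finset (Sym2 V)}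
    (hdiag : ∀ g ∈ R, ¬ g.IsDiag)
    (hacyc : (SimpleGraph.fromEdgeSet (↑R : Set (Sym2 V))).IsAcyclic)
    (hne : R.Nonempty) :
    ∃ v, (R.filter (fun g => v ∈ g)).card = 1 := by
  classical
  set H := SimpleGraph.fromEdgeSet (↑R : Set (Sym2 V)) with hH
  obtain ⟨g₀, hg₀⟩ := hne
  induction g₀ using Sym2.ind with
  | _ x y =>
  have hxy : x ≠ y := fun hh => hdiag _ hg₀ (by simp [hh])
  have hadj : H.Adj x y := by
    rw [hH, SimpleGraph.fromEdgeSet_adj]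
    exact ⟨hg₀, hxy⟩
  have hVpos : 0 < Fintype.card V := Fintype.card_pos_iff.mpr ⟨x⟩
  set P : ℕ → Prop := fun ℓ => ∃ (a c : V) (p : H.Walk a c), p.IsPath ∧ p.length = ℓ with hP
  have h1 : P 1 := by
    refine ⟨x, y, SimpleGraph.Walk.cons hadj SimpleGraph.Walk.nil, ?_, rfl⟩
    rw [SimpleGraph.Walk.cons_isPath_iff]
    exact ⟨SimpleGraph.Walk.IsPath.nil, by simp [hadj.ne]⟩
  have hbound : ∀ ℓ, P ℓ → ℓ ≤ Fintype.card V := by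
    rintro ℓ ⟨a, c, p, hp, rfl⟩
    exact le_of_lt hp.length_lt
  have h1n : 1 ≤ Fintype.card V := hVpos
  have hPmax : P (Nat.findGreatest P (Fintype.card V)) :=
    Nat.findGreatest_spec h1n h1
  have hge1 : 1 ≤ Nat.findGreatest P (Fintype.card V) := Nat.le_findGreatest h1n h1
  have hmax : ∀ m, Nat.findGreatest P (Fintype.card V) < m → ¬ P m := by
    intro m hm hPm
    rcases le_or_gt m (Fintype.card V) with hmn | hmn
    · exact Nat.findGreatest_is_greatest hm hmn hPm
    · exact absurd (hbound m hPm) (not_le.mpr hmn)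
  obtain ⟨a, c, p, hp, hlen⟩ := hPmax
  -- p has length ≥ 1
  rcases p with _ | @⟨a, b, c, hab, q⟩
  · simp at hlen; omega
  refine ⟨a, ?_⟩
  have hfirst : s(a, b) ∈ R := by
    have := hab
    rw [hH, SimpleGraph.fromEdgeSet_adj] at this
    exact this.1
  have hmem1 : s(a,b) ∈ R.filter (fun g => a ∈ g) := by
    simp [hfirst]
  by_contra hcard
  have h2le : 2 ≤ (R.filter (fun g => a ∈ g)).card := by
    have hpos : 0 < (R.filter (fun g => a ∈ g)).card := Finset.card_pos.mpr ⟨_, hmem1⟩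
    omega
  obtain ⟨g1, hg1, g2, hg2, hgne⟩ := Finset.one_lt_card.mp h2le
  -- extract neighbors
  have hnbr : ∀ g ∈ R.filter (fun g => a ∈ g), ∃ w, g = s(a, w) ∧ H.Adj a w := by
    intro g hg
    rw [Finset.mem_filter] at hg
    obtain ⟨w, rfl⟩ := Sym2.mem_iff_exists.mp hg.2
    refine ⟨w, rfl, ?_⟩
    rw [hH, SimpleGraph.fromEdgeSet_adj]
    exact ⟨hg.1, fun hh => hdiag _ hg.1 (by simp [hh])⟩
  obtain ⟨w1, rfl, hw1⟩ := hnbr g1 hg1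
  obtain ⟨w2, rfl, hw2⟩ := hnbr g2 hg2
  have hwne : w1 ≠ w2 := fun hh => hgne (by rw [hh])
  -- pick neighbor different from b
  have hpick : ∃ w, H.Adj a w ∧ w ≠ b := by
    rcases eq_or_ne w1 b with rfl | hne1
    · exact ⟨w2, hw2, fun hh => hwne hh.symm⟩
    · exact ⟨w1, hw1, hne1⟩
  obtain ⟨w, hw, hwb⟩ := hpick
  by_cases hsupp : w ∈ (SimpleGraph.Walk.cons hab q).support
  · -- cycle
    set q' := (SimpleGraph.Walk.cons hab q).takeUntil w hsupp with hq'
    have hq'path : q'.IsPath := hp.takeUntil hsupp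
    have hne : s(w, a) ∉ q'.edges := by
      intro hmem
      have : s(a, w) ∈ (SimpleGraph.Walk.cons hab q).edges :=
        (SimpleGraph.Walk.edges_takeUntil_subset _ hsupp) (Sym2.eq_swap ▸ hmem)
      exact hwb (jl_edge_head hp this)
    have hcyc : (SimpleGraph.Walk.cons hw.symm q').IsCycle :=
      (SimpleGraph.Walk.cons_isCycle_iff q' hw.symm).mpr ⟨hq'path, hne⟩
    exact hacyc _ hcyc
  · -- extend
    have hext : P ((SimpleGraph.Walk.cons hab q).length + 1) := by
      refine ⟨w, c, SimpleGraph.Walk.cons hw.symm (SimpleGraph.Walk.cons hab q), ?_, by simp⟩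
      rw [SimpleGraph.Walk.cons_isPath_iff]
      exact ⟨hp, hsupp⟩
    exact hmax _ (by omega) hext


lemma jl_card_le_of_acyclic [Fintype V] [DecidableEq V] :
    ∀ (n : ℕ) (S : Finset V) (R : Finset (Sym2 V)), S.card ≤ n →
    (∀ g ∈ R, ¬ g.IsDiag) →
    (SimpleGraph.fromEdgeSet (↑R : Set (Sym2 V))).IsAcyclic →
    (∀ g ∈ R, ∀ v ∈ g, v ∈ S) → S.Nonempty → R.card + 1 ≤ S.card := by
  intro n
  induction n with
  | zero =>
    intro S R hS _ _ _ hSne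
    exact absurd (Finset.card_pos.mpr hSne) (by omega)
  | succ n ih =>
    intro S R hS hdiag hacyc hin hSne
    rcases Finset.eq_empty_or_nonempty R with rfl | hRne
    · simpa using Finset.card_pos.mpr hSne
    obtain ⟨v, hv⟩ := jl_exists_leaf hdiag hacyc hRne
    obtain ⟨g₀, hg₀⟩ := Finset.card_pos.mp (by omega : 0 < (R.filter (fun g => v ∈ g)).card)
    rw [Finset.mem_filter] at hg₀
    have hvS : v ∈ S := hin _ hg₀.1 _ hg₀.2
    obtain ⟨w, hgw⟩ := Sym2.mem_iff_exists.mp hg₀.2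
    have hwv : w ≠ v := by
      intro hh; exact hdiag _ hg₀.1 (by simp [hgw, hh])
    have hwS' : w ∈ S.erase v := Finset.mem_erase.mpr ⟨hwv, hin _ hg₀.1 _ (by simp [hgw])⟩
    set R' := R.filter (fun g => ¬ v ∈ g) with hR'
    have hsplit : (R.filter (fun g => v ∈ g)).card + R'.card = R.card :=
      Finset.card_filter_add_card_filter_not _
    have hsub : R' ⊆ R := Finset.filter_subset _ _
    have hstep := ih (S.erase v) R'
      (by rw [Finset.card_erase_of_mem hvS]; omega)
      (fun g hg => hdiag g (hsub hg))
      (jl_acyclic_mono (SimpleGraph.fromEdgeSet_mono (by exact_mod_cast hsub)) hacyc)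
      (fun g hg x hx => by
        rw [hR', Finset.mem_filter] at hg
        refine Finset.mem_erase.mpr ⟨?_, hin _ hg.1 _ hx⟩
        intro hh; exact hg.2 (hh ▸ hx))
      ⟨w, hwS'⟩
    rw [Finset.card_erase_of_mem hvS] at hstep
    have hSpos : 0 < S.card := Finset.card_pos.mpr hSne
    omega

lemma jl_connected_of_acyclic_card [Fintype V] [DecidableEq V] [Nonempty V]
    {R : Finset (Sym2 V)}
    (hdiag : ∀ g ∈ R, ¬ g.IsDiag)
    (hacyc : (SimpleGraph.fromEdgeSet (↑R : Set (Sym2 V))).IsAcyclic)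
    (hcard : Fintype.card V ≤ R.card + 1) :
    (SimpleGraph.fromEdgeSet (↑R : Set (Sym2 V))).Connected := by
  classical
  rw [SimpleGraph.connected_iff]
  refine ⟨?_, inferInstance⟩
  intro u v
  by_contra hnr
  set H := SimpleGraph.fromEdgeSet (↑R : Set (Sym2 V)) with hH
  set K := Finset.univ.filter (fun w => H.Reachable u w) with hK
  have huK : u ∈ K := by simp only [hK, Finset.mem_filter, Finset.mem_univ, true_and]; exact SimpleGraph.Reachable.refl u
  have hvK : v ∉ K := by simp only [hK, Finset.mem_filter, Finset.mem_univ, true_and]; exact hnr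
  -- edges are entirely inside K or entirely outside
  have hdich : ∀ g ∈ R, (∀ x ∈ g, x ∈ K) ∨ (∀ x ∈ g, x ∈ Finset.univ \ K) := by
    intro g hg
    induction g using Sym2.ind with
    | _ a b =>
    have hadj : H.Adj a b := by
      rw [hH, SimpleGraph.fromEdgeSet_adj]
      exact ⟨hg, fun hh => hdiag _ hg (by simp [hh])⟩
    by_cases haK : a ∈ K
    · left
      intro x hx
      rcases Sym2.mem_iff.mp hx with rfl | rfl
      · exact haK
      · simp only [hK, Finset.mem_filter, Finset.mem_univ, true_and] at haK ⊢
        exact haK.trans hadj.reachable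
    · right
      intro x hx
      rcases Sym2.mem_iff.mp hx with rfl | rfl
      · simp [haK]
      · simp only [Finset.mem_sdiff, Finset.mem_univ, true_and]
        intro hbK
        apply haK
        simp only [hK, Finset.mem_filter, Finset.mem_univ, true_and] at hbK ⊢
        exact hbK.trans hadj.symm.reachable
  set RK := R.filter (fun g => ∀ x ∈ g, x ∈ K) with hRK
  set Rout := R.filter (fun g => ¬ ∀ x ∈ g, x ∈ K) with hRout
  have hsplit : RK.card + Rout.card = R.card := Finset.card_filter_add_card_filter_not _
  have h1 := jl_card_le_of_acyclic (V := V) K.card K RK le_rfl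
    (fun g hg => hdiag g (Finset.filter_subset _ _ hg))
    (jl_acyclic_mono (SimpleGraph.fromEdgeSet_mono (by exact_mod_cast Finset.filter_subset _ _)) hacyc)
    (fun g hg x hx => (Finset.mem_filter.mp hg).2 x hx)
    ⟨u, huK⟩
  have h2 := jl_card_le_of_acyclic (V := V) (Finset.univ \ K).card (Finset.univ \ K) Rout le_rfl
    (fun g hg => hdiag g (Finset.filter_subset _ _ hg))
    (jl_acyclic_mono (SimpleGraph.fromEdgeSet_mono (by exact_mod_cast Finset.filter_subset _ _)) hacyc)
    (fun g hg x hx => by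
      rw [hRout, Finset.mem_filter] at hg
      rcases hdich g hg.1 with hall | hall
      · exact absurd hall hg.2
      · exact hall x hx)
    ⟨v, by simp [hvK]⟩
  have hcardK : K.card + (Finset.univ \ K).card = Fintype.card V := by
    rw [Finset.card_sdiff_of_subset (Finset.subset_univ K), Finset.card_univ]
    have := Finset.card_le_card (Finset.subset_univ K)
    rw [Finset.card_univ] at this
    omega
  omega

lemma jl_hrc_mono {k : ℕ} {φ : Sym2 V → Fin k} {H G : SimpleGraph V} (h : H ≤ G)
    (hnr : ¬ HasRainbowCycle G φ) : ¬ HasRainbowCycle H φ := by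
  rintro ⟨v, c, hc, hrb⟩
  refine hnr ⟨v, c.transfer G (fun e he => (SimpleGraph.edgeSet_mono h) (c.edges_subset_edgeSet he)),
    hc.transfer _, ?_⟩
  rw [SimpleGraph.Walk.edges_transfer]
  exact hrb

lemma jl_acyclic_of_rainbow {k : ℕ} {φ : Sym2 V → Fin k} {G : SimpleGraph V}
    (hnr : ¬ HasRainbowCycle G φ) {R : Finset (Sym2 V)}
    (hsub : ↑R ⊆ G.edgeSet) (hrb : Set.InjOn φ ↑R) :
    (SimpleGraph.fromEdgeSet (↑R : Set (Sym2 V))).IsAcyclic := by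
  intro v c hc
  have hedges : ∀ e ∈ c.edges, e ∈ G.edgeSet := by
    intro e he
    have := c.edges_subset_edgeSet he
    rw [SimpleGraph.edgeSet_fromEdgeSet] at this
    exact hsub this.1
  refine hnr ⟨v, c.transfer G hedges, hc.transfer _, ?_⟩
  rw [SimpleGraph.Walk.edges_transfer]
  intro e1 he1 e2 he2 heq
  apply hrb _ _ heq
  · have := c.edges_subset_edgeSet he1
    rw [SimpleGraph.edgeSet_fromEdgeSet] at this
    exact this.1
  · have := c.edges_subset_edgeSet he2
    rw [SimpleGraph.edgeSet_fromEdgeSet] at this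
    exact this.1

lemma jl_connected_deleteEdge {G : SimpleGraph V} {x y : V} (hG : G.Connected)
    (hr : (G.deleteEdges {s(x,y)}).Reachable x y) :
    (G.deleteEdges {s(x,y)}).Connected := by
  rw [SimpleGraph.connected_iff]
  refine ⟨?_, hG.nonempty⟩
  have key : ∀ {a c : V} (_ : G.Walk a c), (G.deleteEdges {s(x,y)}).Reachable a c := by
    intro a c p
    induction p with
    | nil => exact SimpleGraph.Reachable.refl _
    | cons hadj q ih =>
      rename_i d e f
      refine SimpleGraph.Reachable.trans ?_ ih
      by_cases heq : s(d, e) = s(x, y)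
      · rcases Sym2.eq_iff.mp heq with ⟨rfl, rfl⟩ | ⟨rfl, rfl⟩
        · exact hr
        · exact hr.symm
      · exact SimpleGraph.Adj.reachable (by
          rw [SimpleGraph.deleteEdges_adj]
          exact ⟨hadj, by simpa using heq⟩)
  intro a c
  exact key ((hG.preconnected a c).some)

/-- The maximal product of `r` positive integers summing to `m`. -/
def jlMaxprod (m r : ℕ) : ℕ := (m / r) ^ (r - m % r) * (m / r + 1) ^ (m % r)

lemma jl_prod_near_equal {r : ℕ} (hr : 0 < r) (a : Fin r → ℕ)
    (hnear : ∀ i j, a i ≤ a j + 1) :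
    ∏ i, a i = jlMaxprod (∑ i, a i) r := by
  classical
  have hne : (Finset.univ : Finset (Fin r)).Nonempty := ⟨⟨0, hr⟩, Finset.mem_univ _⟩
  obtain ⟨i₀, -, hmin⟩ := Finset.exists_min_image Finset.univ a hne
  set α := a i₀ with hα
  have hub : ∀ i, a i ≤ α + 1 := fun i => hnear i i₀
  have hlb : ∀ i, α ≤ a i := fun i => hmin i (Finset.mem_univ i)
  set k := (Finset.univ.filter (fun i => a i = α + 1)).card with hk
  have hcompl : ∀ i, ¬ (a i = α + 1) → a i = α := by
    intro i hi
    have h1 := hub i; have h2 := hlb i; omega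
  have hcards : k + (Finset.univ.filter (fun i => ¬ a i = α + 1)).card = r := by
    rw [hk, Finset.card_filter_add_card_filter_not, Finset.card_univ, Fintype.card_fin]
  have hkr : k < r := by
    have : i₀ ∈ Finset.univ.filter (fun i => ¬ a i = α + 1) := by
      simp only [Finset.mem_filter, Finset.mem_univ, true_and]; omega
    have hpos : 0 < (Finset.univ.filter (fun i => ¬ a i = α + 1)).card :=
      Finset.card_pos.mpr ⟨i₀, this⟩
    omega
  have hsum : ∑ i, a i = α * r + k := by
    rw [← Finset.sum_filter_add_sum_filter_not Finset.univ (fun i => a i = α + 1)]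
    have e1 : ∑ i ∈ Finset.univ.filter (fun i => a i = α + 1), a i = (α + 1) * k := by
      rw [Finset.sum_congr rfl (fun i hi => (Finset.mem_filter.mp hi).2), Finset.sum_const,
        smul_eq_mul, mul_comm]
    have e2 : ∑ i ∈ Finset.univ.filter (fun i => ¬ a i = α + 1), a i
        = α * (r - k) := by
      rw [Finset.sum_congr rfl (fun i hi => hcompl i (Finset.mem_filter.mp hi).2), Finset.sum_const,
        smul_eq_mul, mul_comm]
      congr 1
      omega
    rw [e1, e2]
    have : r - k + k = r := by omega
    nlinarith [this]
  have hdiv : (∑ i, a i) / r = α ∧ (∑ i, a i) % r = k := by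
    constructor
    · rw [hsum, mul_comm, Nat.mul_add_div hr, Nat.div_eq_of_lt hkr]; omega
    · rw [hsum, mul_comm, Nat.mul_add_mod, Nat.mod_eq_of_lt hkr]
  have hprod : ∏ i, a i = α ^ (r - k) * (α + 1) ^ k := by
    rw [← Finset.prod_filter_mul_prod_filter_not Finset.univ (fun i => a i = α + 1)]
    have e1 : ∏ i ∈ Finset.univ.filter (fun i => a i = α + 1), a i = (α + 1) ^ k := by
      rw [Finset.prod_congr rfl (fun i hi => (Finset.mem_filter.mp hi).2), Finset.prod_const]
    have e2 : ∏ i ∈ Finset.univ.filter (fun i => ¬ a i = α + 1), a i = α ^ (r - k) := by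
      rw [Finset.prod_congr rfl (fun i hi => hcompl i (Finset.mem_filter.mp hi).2),
        Finset.prod_const]
      congr 1
      omega
    rw [e1, e2, mul_comm]
  rw [hprod, jlMaxprod, hdiv.1, hdiv.2]

lemma jl_prod_le_maxprod {r : ℕ} (hr : 0 < r) :
    ∀ (N : ℕ) (b : Fin r → ℕ), (∀ i, 1 ≤ b i) → (∑ i, (b i)^2 ≤ N) →
      ∏ i, b i ≤ jlMaxprod (∑ i, b i) r := by
  classical
  intro N
  induction N with
  | zero =>
    intro b hb hN
    exfalso
    have : (1 : ℕ) ≤ ∑ i, (b i)^2 := by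
      calc (1:ℕ) ≤ ∑ i : Fin r, 1 := by simp [Finset.card_univ]; omega
      _ ≤ ∑ i, (b i)^2 := Finset.sum_le_sum (fun i _ => Nat.one_le_iff_ne_zero.mpr (by
            have := hb i; positivity))
    omega
  | succ N ih =>
    intro b hb hN
    by_cases hne : ∀ i j, b i ≤ b j + 1
    · rw [jl_prod_near_equal hr b hne]
    · push_neg at hne
      obtain ⟨i, j, hij⟩ := hne
      have hineq : b j + 2 ≤ b i := by omega
      have hij' : i ≠ j := by intro h; rw [h] at hineq; omega
      obtain ⟨c, hc⟩ : ∃ c, b i = c + 1 := ⟨b i - 1, by omega⟩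
      have hcy : b j + 1 ≤ c := by omega
      set b' := Function.update (Function.update b i c) j (b j + 1) with hb'
      have hb'i : b' i = c := by
        rw [hb', Function.update_of_ne hij', Function.update_self]
      have hb'j : b' j = b j + 1 := by rw [hb', Function.update_self]
      have hb'other : ∀ x, x ≠ i → x ≠ j → b' x = b x := by
        intro x hxi hxj
        rw [hb', Function.update_of_ne hxj, Function.update_of_ne hxi]
      -- decompositions over univ
      have hdecomp : ∀ (f : Fin r → ℕ),
          ∑ x, f x = f i + (f j + ∑ x ∈ (Finset.univ.erase i).erase j, f x) := by
        intro f
        rw [Finset.add_sum_erase _ f (Finset.mem_erase.mpr ⟨Ne.symm hij', Finset.mem_univ j⟩),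
          Finset.add_sum_erase _ f (Finset.mem_univ i)]
      have hdecompP : ∀ (f : Fin r → ℕ),
          ∏ x, f x = f i * (f j * ∏ x ∈ (Finset.univ.erase i).erase j, f x) := by
        intro f
        rw [Finset.mul_prod_erase _ f (Finset.mem_erase.mpr ⟨Ne.symm hij', Finset.mem_univ j⟩),
          Finset.mul_prod_erase _ f (Finset.mem_univ i)]
      have hrestS : ∑ x ∈ (Finset.univ.erase i).erase j, b' x
          = ∑ x ∈ (Finset.univ.erase i).erase j, b x :=
        Finset.sum_congr rfl (fun x hx => by
          rw [Finset.mem_erase, Finset.mem_erase] at hx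
          exact hb'other x hx.2.1 hx.1)
      have hrestP : ∏ x ∈ (Finset.univ.erase i).erase j, b' x
          = ∏ x ∈ (Finset.univ.erase i).erase j, b x :=
        Finset.prod_congr rfl (fun x hx => by
          rw [Finset.mem_erase, Finset.mem_erase] at hx
          exact hb'other x hx.2.1 hx.1)
      have hsum' : ∑ x, b' x = ∑ x, b x := by
        rw [hdecomp b', hdecomp b, hb'i, hb'j, hrestS]; omega
      have hsq : ∑ x, (b' x)^2 + 2 ≤ ∑ x, (b x)^2 := by
        have d1 : ∑ x, (b' x)^2 = (b' i)^2 + ((b' j)^2 + ∑ x ∈ (Finset.univ.erase i).erase j, (b' x)^2) :=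
          hdecomp _
        have d2 : ∑ x, (b x)^2 = (b i)^2 + ((b j)^2 + ∑ x ∈ (Finset.univ.erase i).erase j, (b x)^2) :=
          hdecomp _
        have hrsq : ∑ x ∈ (Finset.univ.erase i).erase j, (b' x)^2
            = ∑ x ∈ (Finset.univ.erase i).erase j, (b x)^2 :=
          Finset.sum_congr rfl (fun x hx => by
            rw [Finset.mem_erase, Finset.mem_erase] at hx
            rw [hb'other x hx.2.1 hx.1])
        rw [d1, d2, hrsq, hb'i, hb'j, hc]
        nlinarith [hcy]
      have hprodle : ∏ x, b x ≤ ∏ x, b' x := by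
        rw [hdecompP b', hdecompP b, hb'i, hb'j, hrestP, ← mul_assoc, ← mul_assoc]
        apply Nat.mul_le_mul_right
        nlinarith [hcy]
      have hb'pos : ∀ x, 1 ≤ b' x := by
        intro x
        rcases eq_or_ne x i with rfl | hxi
        · rw [hb'i]; omega
        rcases eq_or_ne x j with rfl | hxj
        · rw [hb'j]; omega
        · rw [hb'other x hxi hxj]; exact hb x
      have := ih b' hb'pos (by omega)
      rw [hsum'] at this
      exact le_trans hprodle this

lemma jl_arith {r : ℕ} (a b : Fin r → ℕ) (ha2 : ∀ i, 2 ≤ a i)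
    (hnear : ∀ i j, a i ≤ a j + 1) (hsum : ∑ i, b i = ∑ i, a i)
    (i₀ : Fin r) (hb1 : b i₀ = 1) :
    ∏ i, b i < ∏ i, a i := by
  classical
  have hr : 0 < r := i₀.pos
  have hapos : 0 < ∏ i, a i := Finset.prod_pos (fun i _ => by have := ha2 i; omega)
  by_cases hz : ∃ j, b j = 0
  · obtain ⟨j, hj⟩ := hz
    rw [Finset.prod_eq_zero (Finset.mem_univ j) hj]
    exact hapos
  push_neg at hz
  have hb1' : ∀ i, 1 ≤ b i := fun i => Nat.one_le_iff_ne_zero.mpr (hz i)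
  -- find j ≠ i₀ with b j ≥ 3
  have hsumA : 2 * r ≤ ∑ i, a i := by
    calc 2 * r = (Finset.univ : Finset (Fin r)).card * 2 := by
          rw [Finset.card_univ, Fintype.card_fin]; ring
    _ ≤ ∑ i, a i := Finset.card_nsmul_le_sum _ _ _ (fun i _ => ha2 i)
  obtain ⟨j, hji, hj3⟩ : ∃ j, j ≠ i₀ ∧ 3 ≤ b j := by
    by_contra hcon
    push_neg at hcon
    have hbound : ∑ x ∈ Finset.univ.erase i₀, b x ≤ (Finset.univ.erase i₀).card * 2 :=
      Finset.sum_le_card_nsmul _ _ _ (fun x hx => by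
        have := hcon x (Finset.mem_erase.mp hx).1; omega)
    have hdec : ∑ x, b x = b i₀ + ∑ x ∈ Finset.univ.erase i₀, b x :=
      (Finset.add_sum_erase _ b (Finset.mem_univ i₀)).symm
    rw [Finset.card_erase_of_mem (Finset.mem_univ i₀), Finset.card_univ, Fintype.card_fin] at hbound
    omega
  set b' := Function.update (Function.update b i₀ 2) j (b j - 1) with hb'
  have hb'i : b' i₀ = 2 := by
    rw [hb', Function.update_of_ne (Ne.symm hji), Function.update_self]
  have hb'j : b' j = b j - 1 := by rw [hb', Function.update_self]
  have hb'other : ∀ x, x ≠ i₀ → x ≠ j → b' x = b x := by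
    intro x hxi hxj
    rw [hb', Function.update_of_ne hxj, Function.update_of_ne hxi]
  have hdecomp : ∀ (f : Fin r → ℕ),
      ∑ x, f x = f i₀ + (f j + ∑ x ∈ (Finset.univ.erase i₀).erase j, f x) := by
    intro f
    rw [Finset.add_sum_erase _ f (Finset.mem_erase.mpr ⟨hji, Finset.mem_univ j⟩),
      Finset.add_sum_erase _ f (Finset.mem_univ i₀)]
  have hdecompP : ∀ (f : Fin r → ℕ),
      ∏ x, f x = f i₀ * (f j * ∏ x ∈ (Finset.univ.erase i₀).erase j, f x) := by
    intro f
    rw [Finset.mul_prod_erase _ f (Finset.mem_erase.mpr ⟨hji, Finset.mem_univ j⟩),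
      Finset.mul_prod_erase _ f (Finset.mem_univ i₀)]
  have hrestS : ∑ x ∈ (Finset.univ.erase i₀).erase j, b' x
      = ∑ x ∈ (Finset.univ.erase i₀).erase j, b x :=
    Finset.sum_congr rfl (fun x hx => by
      rw [Finset.mem_erase, Finset.mem_erase] at hx
      exact hb'other x hx.2.1 hx.1)
  have hrestP : ∏ x ∈ (Finset.univ.erase i₀).erase j, b' x
      = ∏ x ∈ (Finset.univ.erase i₀).erase j, b x :=
    Finset.prod_congr rfl (fun x hx => by
      rw [Finset.mem_erase, Finset.mem_erase] at hx
      exact hb'other x hx.2.1 hx.1)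
  have hsum' : ∑ x, b' x = ∑ x, b x := by
    rw [hdecomp b', hdecomp b, hb'i, hb'j, hrestS, hb1]; omega
  have hrestpos : 0 < ∏ x ∈ (Finset.univ.erase i₀).erase j, b x :=
    Finset.prod_pos (fun x _ => hb1' x)
  have hstrict : ∏ x, b x < ∏ x, b' x := by
    rw [hdecompP b', hdecompP b, hb'i, hb'j, hb1, one_mul, ← mul_assoc]
    have h1 : b j < 2 * (b j - 1) := by omega
    calc b j * ∏ x ∈ (Finset.univ.erase i₀).erase j, b x
        < (2 * (b j - 1)) * ∏ x ∈ (Finset.univ.erase i₀).erase j, b x := by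
          exact (Nat.mul_lt_mul_right hrestpos).mpr h1
      _ = 2 * (b j - 1) * ∏ x ∈ (Finset.univ.erase i₀).erase j, b' x := by rw [hrestP]
  have hb'pos : ∀ x, 1 ≤ b' x := by
    intro x
    rcases eq_or_ne x i₀ with rfl | hxi
    · omega
    rcases eq_or_ne x j with rfl | hxj
    · omega
    · rw [hb'other x hxi hxj]; exact hb1' x
  have hle : ∏ x, b' x ≤ jlMaxprod (∑ x, b' x) r :=
    jl_prod_le_maxprod hr (∑ x, (b' x)^2) b' hb'pos le_rfl
  rw [hsum', hsum] at hle
  rw [jl_prod_near_equal hr a hnear] at *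
  exact lt_of_lt_of_le hstrict hle

lemma jl_numRST_le [Fintype V] [DecidableEq V] (G : SimpleGraph V) [Fintype G.edgeSet]
    (φ : Sym2 V → Fin (Fintype.card V - 1)) :
    numRST G φ ≤ ∏ c, (G.edgeFinset.filter (fun e => φ e = c)).card := by
  classical
  -- facts about members
  have huniq : ∀ (T : Finset (Sym2 V)), IsSpanningTreeEdges G T → IsRainbow φ T →
      ∀ c : Fin (Fintype.card V - 1), ∃! g, g ∈ T ∧ φ g = c := by
    intro T hT hrb c
    have htree : (SimpleGraph.fromEdgeSet (↑T : Set (Sym2 V))).IsTree := ⟨hT.2.1, hT.2.2⟩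
    have hTedge : (SimpleGraph.fromEdgeSet (↑T : Set (Sym2 V))).edgeFinset = T := by
      ext g
      rw [SimpleGraph.mem_edgeFinset, SimpleGraph.edgeSet_fromEdgeSet, Set.mem_diff]
      constructor
      · rintro ⟨hg, -⟩; exact_mod_cast hg
      · intro hg
        refine ⟨by exact_mod_cast hg, ?_⟩
        exact SimpleGraph.not_isDiag_of_mem_edgeSet G (hT.1 hg)
    have hcardT : T.card = Fintype.card V - 1 := by
      have hh := htree.card_edgeFinset
      rw [hTedge] at hh
      omega
    have himg : T.image φ = Finset.univ := by
      apply Finset.eq_univ_of_card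
      rw [Finset.card_image_of_injOn hrb, hcardT, Fintype.card_fin]
    have hex : ∃ g, g ∈ T ∧ φ g = c := by
      have : c ∈ T.image φ := by rw [himg]; exact Finset.mem_univ c
      obtain ⟨g, hg, hgc⟩ := Finset.mem_image.mp this
      exact ⟨g, hg, hgc⟩
    obtain ⟨g, hg⟩ := hex
    refine ⟨g, hg, ?_⟩
    rintro g' ⟨hg', hgc'⟩
    exact hrb hg' hg.1 (by rw [hgc', hg.2])
  set F : {T : Finset (Sym2 V) // IsSpanningTreeEdges G T ∧ IsRainbow φ T} →
      (∀ c : Fin (Fintype.card V - 1), {e // e ∈ G.edgeFinset.filter (fun e => φ e = c)}) :=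
    fun T c => ⟨Finset.choose (fun g => φ g = c) T.1 (huniq T.1 T.2.1 T.2.2 c), by
      rw [Finset.mem_filter]
      refine ⟨?_, Finset.choose_property (fun g => φ g = c) T.1 _⟩
      rw [SimpleGraph.mem_edgeFinset]
      exact T.2.1.1 (Finset.choose_mem (fun g => φ g = c) T.1 _)⟩ with hF
  have hFinj : Function.Injective F := by
    rintro ⟨T1, hT1⟩ ⟨T2, hT2⟩ heq
    apply Subtype.ext
    have hchoose : ∀ c, Finset.choose (fun g => φ g = c) T1 (huniq T1 hT1.1 hT1.2 c)
        = Finset.choose (fun g => φ g = c) T2 (huniq T2 hT2.1 hT2.2 c) := by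
      intro c
      have := congrFun heq c
      simpa [hF] using congrArg Subtype.val this
    have hsub : ∀ (Ta Tb : Finset (Sym2 V)) (ha : IsSpanningTreeEdges G Ta ∧ IsRainbow φ Ta)
        (hb : IsSpanningTreeEdges G Tb ∧ IsRainbow φ Tb),
        (∀ c, Finset.choose (fun g => φ g = c) Ta (huniq Ta ha.1 ha.2 c)
          = Finset.choose (fun g => φ g = c) Tb (huniq Tb hb.1 hb.2 c)) → Ta ⊆ Tb := by
      intro Ta Tb ha hb hcc g hg
      set c := φ g with hc
      have hu := huniq Ta ha.1 ha.2 c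
      have h1 : Finset.choose (fun g => φ g = c) Ta (huniq Ta ha.1 ha.2 c) = g := by
        obtain ⟨g', hg', hgu⟩ := hu
        rw [hgu _ ⟨Finset.choose_mem (fun g => φ g = c) Ta _, Finset.choose_property (fun g => φ g = c) Ta _⟩, hgu g ⟨hg, rfl⟩]
      rw [← h1, hcc c]
      exact Finset.choose_mem _ _ _
    exact Finset.Subset.antisymm (hsub T1 T2 hT1 hT2 hchoose)
      (hsub T2 T1 hT2 hT1 (fun c => (hchoose c).symm))
  have := Nat.card_le_card_of_injective F hFinj
  rw [numRST]
  refine le_trans this ?_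
  rw [Nat.card_eq_fintype_card]
  rw [Fintype.card_pi]
  apply le_of_eq
  apply Finset.prod_congr rfl
  intro c _
  rw [Fintype.card_coe]

/-- helper: an edge of a graph has two distinct endpoints -/
lemma jl_edge_rep {G : SimpleGraph V} :
    ∀ z ∈ G.edgeSet, ∃ x y : V, z = s(x,y) ∧ G.Adj x y := by
  intro z
  induction z using Sym2.ind with
  | _ x y => exact fun hz => ⟨x, y, rfl, hz⟩

/-- helper: selecting a rainbow system of representatives from an edge set -/
lemma jl_exists_reps {k : ℕ} (φ : Sym2 V → Fin k) (s : Finset (Sym2 V)) [DecidableEq V] :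
    ∃ R : Finset (Sym2 V), R ⊆ s ∧ R.card = (s.image φ).card ∧ Set.InjOn φ ↑R := by
  classical
  have hpick : ∀ c ∈ s.image φ, ∃ g, g ∈ s ∧ φ g = c := by
    intro c hc
    obtain ⟨g, hg, hgc⟩ := Finset.mem_image.mp hc
    exact ⟨g, hg, hgc⟩
  choose pick hp1 hp2 using hpick
  refine ⟨(s.image φ).attach.image (fun c => pick c.1 c.2), ?_, ?_, ?_⟩
  · intro g hg
    obtain ⟨c, -, rfl⟩ := Finset.mem_image.mp hg
    exact hp1 c.1 c.2
  · rw [Finset.card_image_of_injOn, Finset.card_attach]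
    intro c1 _ c2 _ heq
    apply Subtype.ext
    have h := congrArg φ heq
    simp only at h
    rw [hp2, hp2] at h
    exact h
  · intro g1 hg1 g2 hg2 heq
    simp only [Finset.coe_image, Set.mem_image, Finset.mem_coe, Finset.mem_attach] at hg1 hg2
    obtain ⟨c1, -, rfl⟩ := hg1
    obtain ⟨c2, -, rfl⟩ := hg2
    have h := heq
    rw [hp2, hp2] at h
    have : c1 = c2 := Subtype.ext h
    rw [this]

lemma jl_main [Fintype V] [DecidableEq V] :
    ∀ (N : ℕ) (G : SimpleGraph V) (inst : Fintype G.edgeSet),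
      G.edgeFinset.card ≤ N →
      2 ≤ Fintype.card V → G.Connected →
      ∀ (φ : Sym2 V → Fin (Fintype.card V - 1)), IsJLColoring G φ →
      ∃ c, (G.edgeFinset.filter (fun e => φ e = c)).card = 1 := by
  classical
  intro N
  induction N with
  | zero =>
    intro G inst hN h2 hG φ hφ
    exfalso
    obtain ⟨u, v, huv⟩ := Fintype.exists_pair_of_one_lt_card (α := V) (by omega)
    obtain ⟨p⟩ := hG.preconnected u v
    cases p with
    | nil => exact huv rfl
    | cons h q =>
      have : s(u, _) ∈ G.edgeFinset := SimpleGraph.mem_edgeFinset.mpr h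
      have hpos : 0 < G.edgeFinset.card := Finset.card_pos.mpr ⟨_, this⟩
      omega
  | succ N ih =>
    intro G inst hN h2 hG φ hφ
    by_contra hno
    push_neg at hno
    have hsurj := hφ.1
    have hnrc := hφ.2
    have hclass2 : ∀ c, 2 ≤ (G.edgeFinset.filter (fun e => φ e = c)).card := by
      intro c
      obtain ⟨e, he, hec⟩ := hsurj c
      have h1 : e ∈ G.edgeFinset.filter (fun e => φ e = c) := by
        rw [Finset.mem_filter, SimpleGraph.mem_edgeFinset]
        exact ⟨he, hec⟩
      have := Finset.card_pos.mpr ⟨e, h1⟩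
      have := hno c
      omega
    -- Step A : no bridges
    have hbridge : ∀ x y : V, G.Adj x y → (G.deleteEdges {s(x,y)}).Reachable x y := by
      intro x y hadj
      by_contra hnr
      set K := Finset.univ.filter (fun w => (G.deleteEdges {s(x,y)}).Reachable x w) with hK
      have hxK : x ∈ K := by
        simp only [hK, Finset.mem_filter, Finset.mem_univ, true_and]
        exact SimpleGraph.Reachable.refl x
      have hyK : y ∉ K := by
        simp only [hK, Finset.mem_filter, Finset.mem_univ, true_and]
        exact hnr
      have hdich : ∀ g ∈ G.edgeFinset, g ≠ s(x,y) →
          (∀ v ∈ g, v ∈ K) ∨ (∀ v ∈ g, v ∈ Finset.univ \ K) := by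
        intro g hg hgne
        obtain ⟨a, b, rfl, hab⟩ := jl_edge_rep g (SimpleGraph.mem_edgeFinset.mp hg)
        have hadj' : (G.deleteEdges {s(x,y)}).Adj a b := by
          rw [SimpleGraph.deleteEdges_adj]
          exact ⟨hab, by simpa using hgne⟩
        by_cases haK : a ∈ K
        · left
          intro v hv
          rcases Sym2.mem_iff.mp hv with rfl | rfl
          · exact haK
          · simp only [hK, Finset.mem_filter, Finset.mem_univ, true_and] at haK ⊢
            exact haK.trans hadj'.reachable
        · right
          intro v hv
          rcases Sym2.mem_iff.mp hv with rfl | rfl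
          · simp [haK]
          · simp only [Finset.mem_sdiff, Finset.mem_univ, true_and]
            intro hbK
            apply haK
            simp only [hK, Finset.mem_filter, Finset.mem_univ, true_and] at hbK ⊢
            exact hbK.trans hadj'.symm.reachable
      set sK := G.edgeFinset.filter (fun g => ∀ v ∈ g, v ∈ K) with hsK
      set sK' := G.edgeFinset.filter (fun g => ∀ v ∈ g, v ∈ Finset.univ \ K) with hsK'
      -- color counting
      have hcover : (Finset.univ : Finset (Fin (Fintype.card V - 1))) ⊆
          (sK.image φ ∪ sK'.image φ) ∪ {φ s(x,y)} := by
        intro c _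
        obtain ⟨e, he, hec⟩ := hsurj c
        rcases eq_or_ne e s(x,y) with rfl | hne
        · simp [hec]
        · have heF : e ∈ G.edgeFinset := SimpleGraph.mem_edgeFinset.mpr he
          rcases hdich e heF hne with hin | hout
          · apply Finset.mem_union_left
            apply Finset.mem_union_left
            exact Finset.mem_image.mpr ⟨e, Finset.mem_filter.mpr ⟨heF, hin⟩, hec⟩
          · apply Finset.mem_union_left
            apply Finset.mem_union_right
            exact Finset.mem_image.mpr ⟨e, Finset.mem_filter.mpr ⟨heF, hout⟩, hec⟩
      -- the partner edge of s(x,y) makes the singleton redundant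
      have hfmem : s(x,y) ∈ G.edgeFinset := SimpleGraph.mem_edgeFinset.mpr hadj
      have hpartner : ∃ g, g ∈ G.edgeFinset ∧ φ g = φ s(x,y) ∧ g ≠ s(x,y) := by
        obtain ⟨g1, hg1, g2, hg2, h12⟩ := Finset.one_lt_card.mp (hclass2 (φ s(x,y)))
        rw [Finset.mem_filter] at hg1 hg2
        rcases eq_or_ne g1 s(x,y) with rfl | hne
        · exact ⟨g2, hg2.1, hg2.2, fun hh => h12 hh.symm⟩
        · exact ⟨g1, hg1.1, hg1.2, hne⟩
      have hsingleton_sub : ({φ s(x,y)} : Finset (Fin (Fintype.card V - 1))) ⊆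
          sK.image φ ∪ sK'.image φ := by
        obtain ⟨g, hg, hgc, hgne⟩ := hpartner
        intro c hc
        rw [Finset.mem_singleton] at hc
        subst hc
        rcases hdich g hg hgne with hin | hout
        · exact Finset.mem_union_left _ (Finset.mem_image.mpr ⟨g, Finset.mem_filter.mpr ⟨hg, hin⟩, hgc⟩)
        · exact Finset.mem_union_right _ (Finset.mem_image.mpr ⟨g, Finset.mem_filter.mpr ⟨hg, hout⟩, hgc⟩)
      have hcover2 : (Finset.univ : Finset (Fin (Fintype.card V - 1))) ⊆
          sK.image φ ∪ sK'.image φ := by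
        intro c hc
        rcases Finset.mem_union.mp (hcover hc) with h | h
        · exact h
        · exact hsingleton_sub h
      -- bounds on the two color sets
      have hboundK : (sK.image φ).card + 1 ≤ K.card := by
        obtain ⟨R, hRsub, hRcard, hRinj⟩ := jl_exists_reps φ sK
        have hRE : ∀ g ∈ R, g ∈ G.edgeFinset := fun g hg => (Finset.mem_filter.mp (hRsub hg)).1
        rw [← hRcard]
        apply jl_card_le_of_acyclic K.card K R le_rfl
        · exact fun g hg => SimpleGraph.not_isDiag_of_mem_edgeFinset (hRE g hg)
        · exact jl_acyclic_of_rainbow hnrc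
            (fun g hg => SimpleGraph.mem_edgeFinset.mp (hRE g hg)) hRinj
        · exact fun g hg v hv => (Finset.mem_filter.mp (hRsub hg)).2 v hv
        · exact ⟨x, hxK⟩
      have hboundK' : (sK'.image φ).card + 1 ≤ (Finset.univ \ K).card := by
        obtain ⟨R, hRsub, hRcard, hRinj⟩ := jl_exists_reps φ sK'
        have hRE : ∀ g ∈ R, g ∈ G.edgeFinset := fun g hg => (Finset.mem_filter.mp (hRsub hg)).1
        rw [← hRcard]
        apply jl_card_le_of_acyclic (Finset.univ \ K).card (Finset.univ \ K) R le_rfl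
        · exact fun g hg => SimpleGraph.not_isDiag_of_mem_edgeFinset (hRE g hg)
        · exact jl_acyclic_of_rainbow hnrc
            (fun g hg => SimpleGraph.mem_edgeFinset.mp (hRE g hg)) hRinj
        · exact fun g hg v hv => (Finset.mem_filter.mp (hRsub hg)).2 v hv
        · exact ⟨y, by simp [hyK]⟩
      have hKsize : K.card + (Finset.univ \ K).card = Fintype.card V := by
        rw [Finset.card_sdiff_of_subset (Finset.subset_univ K), Finset.card_univ]
        have := Finset.card_le_card (Finset.subset_univ K)
        rw [Finset.card_univ] at this
        omega
      have hcardle := Finset.card_le_card hcover2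
      have hcardle2 := Finset.card_union_le (sK.image φ) (sK'.image φ)
      rw [Finset.card_univ, Fintype.card_fin] at hcardle
      omega
    -- Step B : every class has exactly two edges
    have hAll2 : ∀ f ∈ G.edgeFinset, (G.edgeFinset.filter (fun e => φ e = φ f)).card = 2 := by
      intro f hf
      obtain ⟨x, y, rfl, hadj⟩ := jl_edge_rep f (SimpleGraph.mem_edgeFinset.mp hf)
      have hreach := hbridge x y hadj
      set G' := G.deleteEdges {s(x,y)} with hG'
      haveI instE' : Fintype G'.edgeSet := Fintype.ofFinite _
      have hG'conn : G'.Connected := jl_connected_deleteEdge hG hreach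
      have hE' : G'.edgeFinset = G.edgeFinset.erase (s(x,y)) := by
        ext g
        rw [SimpleGraph.mem_edgeFinset, Finset.mem_erase, SimpleGraph.mem_edgeFinset, hG',
          SimpleGraph.edgeSet_deleteEdges]
        simp only [Set.mem_diff, Set.mem_singleton_iff]
        tauto
      have hcard' : G'.edgeFinset.card ≤ N := by
        rw [hE', Finset.card_erase_of_mem hf]
        omega
      have hsurj' : ∀ c : Fin (Fintype.card V - 1), ∃ e ∈ G'.edgeSet, φ e = c := by
        intro c
        obtain ⟨g1, hg1, g2, hg2, h12⟩ := Finset.one_lt_card.mp (hclass2 c)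
        rw [Finset.mem_filter] at hg1 hg2
        rcases eq_or_ne g1 s(x,y) with rfl | hne
        · refine ⟨g2, ?_, hg2.2⟩
          rw [hG', SimpleGraph.edgeSet_deleteEdges]
          exact ⟨SimpleGraph.mem_edgeFinset.mp hg2.1, by simpa using fun hh => h12 hh.symm⟩
        · refine ⟨g1, ?_, hg1.2⟩
          rw [hG', SimpleGraph.edgeSet_deleteEdges]
          exact ⟨SimpleGraph.mem_edgeFinset.mp hg1.1, by simpa using hne⟩
      have hnrc' : ¬ HasRainbowCycle G' φ := jl_hrc_mono (SimpleGraph.deleteEdges_le _) hnrc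
      obtain ⟨c₁, hc₁⟩ := ih G' instE' hcard' h2 hG'conn φ ⟨hsurj', hnrc'⟩
      have hfilter' : G'.edgeFinset.filter (fun e => φ e = c₁)
          = (G.edgeFinset.filter (fun e => φ e = c₁)).erase (s(x,y)) := by
        rw [hE', Finset.filter_erase]
      rcases eq_or_ne (φ s(x,y)) c₁ with heq | hne
      · -- class of our edge loses exactly one element
        have hfmem2 : s(x,y) ∈ G.edgeFinset.filter (fun e => φ e = c₁) := by
          rw [Finset.mem_filter]
          exact ⟨hf, heq⟩
        rw [hfilter', Finset.card_erase_of_mem hfmem2] at hc₁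
        rw [heq]
        have := hclass2 c₁
        omega
      · exfalso
        have hnotmem : s(x,y) ∉ G.edgeFinset.filter (fun e => φ e = c₁) := by
          rw [Finset.mem_filter]
          rintro ⟨-, hh⟩
          exact hne hh
        rw [hfilter', Finset.erase_eq_of_notMem hnotmem] at hc₁
        exact hno c₁ hc₁
    have hcl2 : ∀ c, (G.edgeFinset.filter (fun e => φ e = c)).card = 2 := by
      intro c
      obtain ⟨e, he, hec⟩ := hsurj c
      have := hAll2 e (SimpleGraph.mem_edgeFinset.mpr he)
      rw [hec] at this
      exact this
    -- Step C : pick the two edges of each class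
    have hpair : ∀ c, ∃ e f : Sym2 V, e ≠ f ∧
        G.edgeFinset.filter (fun e => φ e = c) = {e, f} :=
      fun c => Finset.card_eq_two.mp (hcl2 c)
    choose eF fF hnef hclEq using hpair
    have heprop : ∀ c, eF c ∈ G.edgeFinset ∧ φ (eF c) = c := by
      intro c
      have : eF c ∈ G.edgeFinset.filter (fun e => φ e = c) := by
        rw [hclEq c]; exact Finset.mem_insert_self _ _
      exact Finset.mem_filter.mp this
    have hfprop : ∀ c, fF c ∈ G.edgeFinset ∧ φ (fF c) = c := by
      intro c
      have : fF c ∈ G.edgeFinset.filter (fun e => φ e = c) := by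
        rw [hclEq c]; exact Finset.mem_insert_of_mem (Finset.mem_singleton_self _)
      exact Finset.mem_filter.mp this
    have hmemcl : ∀ (c : Fin (Fintype.card V - 1)) g, g ∈ G.edgeFinset → φ g = c →
        g = eF c ∨ g = fF c := by
      intro c g hg hgc
      have : g ∈ G.edgeFinset.filter (fun e => φ e = c) := Finset.mem_filter.mpr ⟨hg, hgc⟩
      rw [hclEq c] at this
      simpa using this
    have hcross : ∀ c d, eF c ≠ fF d := by
      intro c d heq
      have h1 := (heprop c).2
      have h2 := (hfprop d).2
      rw [heq] at h1
      rw [h1] at h2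
      exact hnef d (heq ▸ (by rw [h2]))
    have heinj : Function.Injective eF := by
      intro c d heq
      have h1 := (heprop c).2
      have h2 := (heprop d).2
      rw [heq] at h1
      rw [h1] at h2
      exact h2
    have hfinj : Function.Injective fF := by
      intro c d heq
      have h1 := (hfprop c).2
      have h2 := (hfprop d).2
      rw [heq] at h1
      rw [h1] at h2
      exact h2
    -- the tree T
    set T : Finset (Sym2 V) := Finset.univ.image eF with hT
    have hTcard : T.card = Fintype.card V - 1 := by
      rw [hT, Finset.card_image_of_injective _ heinj, Finset.card_univ, Fintype.card_fin]
    have hTmemE : ∀ g ∈ T, g ∈ G.edgeFinset := by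
      intro g hg
      obtain ⟨c, -, rfl⟩ := Finset.mem_image.mp hg
      exact (heprop c).1
    have hTsub : (↑T : Set (Sym2 V)) ⊆ G.edgeSet :=
      fun g hg => SimpleGraph.mem_edgeFinset.mp (hTmemE g hg)
    have hTinj : Set.InjOn φ ↑T := by
      intro g1 hg1 g2 hg2 heq
      obtain ⟨c1, -, rfl⟩ := Finset.mem_image.mp hg1
      obtain ⟨c2, -, rfl⟩ := Finset.mem_image.mp hg2
      rw [(heprop c1).2, (heprop c2).2] at heq
      rw [heq]
    have hfnotT : ∀ c, fF c ∉ T := by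
      intro c hc
      obtain ⟨d, -, hd⟩ := Finset.mem_image.mp hc
      exact hcross d c hd
    have heT : ∀ c, eF c ∈ T := fun c => Finset.mem_image.mpr ⟨c, Finset.mem_univ c, rfl⟩
    have hTacyc := jl_acyclic_of_rainbow hnrc hTsub hTinj
    haveI : Nonempty V := hG.nonempty
    have hTconn := jl_connected_of_acyclic_card
      (fun g hg => SimpleGraph.not_isDiag_of_mem_edgeFinset (hTmemE g hg)) hTacyc
      (by rw [hTcard]; omega)
    -- Step D : fundamental-cycle data for each color
    have hdata : ∀ b : Fin (Fintype.card V - 1),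
        ∃ (x y : V) (p : (SimpleGraph.fromEdgeSet (↑T : Set (Sym2 V))).Walk x y),
          p.IsPath ∧ fF b = s(x,y) ∧
          (∀ g ∈ p.edges, g ∈ T) ∧
          eF b ∈ p.edges ∧
          (∃ c', c' ≠ b ∧ eF c' ∈ p.edges) ∧
          (fF b :: p.edges).Nodup ∧
          (∀ v : V, Even ((fF b :: p.edges).countP (fun g => v ∈ g))) := by
      intro b
      obtain ⟨x, y, hfxy, hadj⟩ := jl_edge_rep (fF b) (SimpleGraph.mem_edgeFinset.mp (hfprop b).1)
      obtain ⟨w⟩ := hTconn.preconnected x y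
      set p : (SimpleGraph.fromEdgeSet (↑T : Set (Sym2 V))).Walk x y := w.toPath.1 with hpdef
      have hp : p.IsPath := w.toPath.2
      have hpT : ∀ g ∈ p.edges, g ∈ T := by
        intro g hg
        have := p.edges_subset_edgeSet hg
        rw [SimpleGraph.edgeSet_fromEdgeSet] at this
        exact_mod_cast this.1
      -- build the cycle in G
      set pG : G.Walk x y := p.transfer G
        (fun g hg => SimpleGraph.mem_edgeFinset.mp (hTmemE g (hpT g hg))) with hpGdef
      have hpGpath : pG.IsPath := hp.transfer _
      have hpGedges : pG.edges = p.edges := p.edges_transfer _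
      have hfnotp : s(y, x) ∉ pG.edges := by
        rw [hpGedges]
        intro hmem
        apply hfnotT b
        rw [hfxy, Sym2.eq_swap]
        exact hpT _ hmem
      set W : G.Walk y y := SimpleGraph.Walk.cons hadj.symm pG with hW
      have hcyc : W.IsCycle :=
        (SimpleGraph.Walk.cons_isCycle_iff pG hadj.symm).mpr ⟨hpGpath, hfnotp⟩
      have hWedges : W.edges = fF b :: p.edges := by
        rw [hW, SimpleGraph.Walk.edges_cons, hpGedges, hfxy, Sym2.eq_swap]
      -- the cycle is not rainbow
      have hnotinj : ¬ Set.InjOn φ {e | e ∈ W.edges} := fun hrb => hnrc ⟨y, W, hcyc, hrb⟩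
      have hpair2 : ∃ g1 ∈ W.edges, ∃ g2 ∈ W.edges, φ g1 = φ g2 ∧ g1 ≠ g2 := by
        by_contra hcon
        push_neg at hcon
        exact hnotinj (fun g1 hg1 g2 hg2 heq => hcon g1 hg1 g2 hg2 heq)
      obtain ⟨g1, hg1, g2, hg2, hfeq, hne12⟩ := hpair2
      have hg1E : g1 ∈ G.edgeFinset := SimpleGraph.mem_edgeFinset.mpr (W.edges_subset_edgeSet hg1)
      have hg2E : g2 ∈ G.edgeFinset := SimpleGraph.mem_edgeFinset.mpr (W.edges_subset_edgeSet hg2)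
      have hfFmem : fF (φ g1) ∈ W.edges ∧ eF (φ g1) ∈ W.edges := by
        rcases hmemcl (φ g1) g1 hg1E rfl with h1 | h1 <;>
          rcases hmemcl (φ g1) g2 hg2E hfeq.symm with h2 | h2
        · exact absurd (h1.trans h2.symm) hne12
        · exact ⟨h2 ▸ hg2, h1 ▸ hg1⟩
        · exact ⟨h1 ▸ hg1, h2 ▸ hg2⟩
        · exact absurd (h1.trans h2.symm) hne12
      have hcol : φ g1 = b := by
        have hmem2 := hfFmem.1
        rw [hWedges] at hmem2
        rcases List.mem_cons.mp hmem2 with h | h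
        · exact hfinj h
        · exact absurd (hpT _ h) (hfnotT (φ g1))
      have heFb : eF b ∈ p.edges := by
        have hmem2 := hfFmem.2
        rw [hcol, hWedges] at hmem2
        rcases List.mem_cons.mp hmem2 with h | h
        · exact absurd h (hcross b b)
        · exact h
      -- a second tree edge on the path
      have hxy : x ≠ y := hadj.ne
      have hsecond : ∃ c', c' ≠ b ∧ eF c' ∈ p.edges := by
        have hxodd : ¬ Even (p.edges.countP (fun g => x ∈ g)) := by
          rw [hp.isTrail.even_countP_edges_iff]
          push_neg
          exact ⟨hxy, fun hh => absurd rfl hh⟩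
        have hyodd : ¬ Even (p.edges.countP (fun g => y ∈ g)) := by
          rw [hp.isTrail.even_countP_edges_iff]
          push_neg
          exact ⟨hxy, fun _ => rfl⟩
        have hxin : ∃ g ∈ p.edges, x ∈ g := by
          have h0 : p.edges.countP (fun g => x ∈ g) ≠ 0 := by
            intro hh; rw [hh] at hxodd; simp at hxodd
          have h3 := List.countP_pos_iff.mp (Nat.pos_of_ne_zero h0)
          simpa using h3
        have hyin : ∃ g ∈ p.edges, y ∈ g := by
          have h0 : p.edges.countP (fun g => y ∈ g) ≠ 0 := by
            intro hh; rw [hh] at hyodd; simp at hyodd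
          have h3 := List.countP_pos_iff.mp (Nat.pos_of_ne_zero h0)
          simpa using h3
        by_contra hcon
        push_neg at hcon
        have hall : ∀ g ∈ p.edges, g = eF b := by
          intro g hg
          obtain ⟨c', -, rfl⟩ := Finset.mem_image.mp (hpT g hg)
          rcases eq_or_ne c' b with rfl | hne'
          · rfl
          · exact absurd hg (hcon c' hne')
        obtain ⟨ga, hga, hxa⟩ := hxin
        obtain ⟨gb, hgb, hyb⟩ := hyin
        rw [hall ga hga] at hxa
        rw [hall gb hgb] at hyb
        have heq2 : eF b = s(x, y) := (Sym2.mem_and_mem_iff hxy).mp ⟨hxa, hyb⟩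
        rw [← hfxy] at heq2
        exact hnef b heq2
      have hnodup : (fF b :: p.edges).Nodup := by
        rw [← hWedges]
        exact hcyc.isTrail.edges_nodup
      have hparity : ∀ v : V, Even ((fF b :: p.edges).countP (fun g => v ∈ g)) := by
        intro v
        rw [← hWedges]
        rw [hcyc.isTrail.even_countP_edges_iff]
        intro hh
        exact absurd rfl hh
      exact ⟨x, y, p, hp, hfxy, hpT, heFb, hsecond, hnodup, hparity⟩
    choose xF yF pF hpFpath hfFs hsubT heFin hsec hCnodup hCparity using hdata
    -- Step E : a minimal directed cycle in the auxiliary digraph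
    choose gfun hgne hgmem using hsec
    have hb₀ : Nonempty (Fin (Fintype.card V - 1)) := ⟨⟨0, by omega⟩⟩
    obtain ⟨b₀⟩ := hb₀
    have hcol2 : ∃ i j : ℕ, i < j ∧ gfun^[i] b₀ = gfun^[j] b₀ := by
      obtain ⟨i, j, hne, heq⟩ :=
        Finite.exists_ne_map_eq_of_infinite (fun i : ℕ => gfun^[i] b₀)
      rcases hne.lt_or_gt with h | h
      · exact ⟨i, j, h, heq⟩
      · exact ⟨j, i, h, heq.symm⟩
    obtain ⟨i, j, hij, hijeq⟩ := hcol2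
    set pp := j - i with hpp
    have hp1 : 1 ≤ pp := by omega
    have hjip : j = i + pp := by omega
    have hp2 : 2 ≤ pp := by
      rcases eq_or_lt_of_le hp1 with h1 | h1
      · exfalso
        have : gfun^[i] b₀ = gfun (gfun^[i] b₀) := by
          conv_lhs => rw [hijeq, hjip, ← h1]
          rw [Function.iterate_succ_apply']
        exact hgne (gfun^[i] b₀) this.symm
      · omega
    set a₀ : ℕ → Fin (Fintype.card V - 1) := fun t => gfun^[i + (pp - 1 - t % pp)] b₀ with ha₀
    have hkey₀ : ∀ t, a₀ t = gfun (a₀ (t + 1)) := by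
      intro t
      have hmlt : t % pp < pp := Nat.mod_lt _ (by omega)
      show gfun^[i + (pp - 1 - t % pp)] b₀ = gfun (gfun^[i + (pp - 1 - (t + 1) % pp)] b₀)
      rcases Nat.lt_or_ge (t % pp) (pp - 1) with hc | hc
      · have h1 : (t + 1) % pp = t % pp + 1 := jl_mod_succ hp2 hc
        have e1 : i + (pp - 1 - t % pp) = (i + (pp - 1 - (t + 1) % pp)) + 1 := by
          rw [h1]; omega
        rw [e1, Function.iterate_succ_apply']
      · have hmeq : t % pp = pp - 1 := by omega
        have h1 : (t + 1) % pp = 0 := jl_mod_succ_zero hp2 hmeq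
        rw [hmeq, h1, Nat.sub_self, Nat.add_zero, Nat.sub_zero]
        conv_lhs => rw [hijeq, hjip]
        have e2 : i + pp = (i + (pp - 1)) + 1 := by omega
        rw [e2, Function.iterate_succ_apply']
    have hedge₀ : ∀ t, a₀ t ≠ a₀ (t + 1) ∧ eF (a₀ t) ∈ (pF (a₀ (t + 1))).edges := by
      intro t
      constructor
      · intro hh
        exact hgne (a₀ (t+1)) (by rw [← hkey₀ t, hh])
      · rw [hkey₀ t]
        exact hgmem (a₀ (t+1))
    set S : ℕ → Prop := fun k => 2 ≤ k ∧ ∃ a : ℕ → Fin (Fintype.card V - 1),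
      (∀ t, a (t + k) = a t) ∧ ∀ t, a t ≠ a (t + 1) ∧ eF (a t) ∈ (pF (a (t + 1))).edges with hS
    have hSp : ∃ k, S k := ⟨pp, hp2, a₀, fun t => by
      rw [ha₀]; simp only [Nat.add_mod_right], hedge₀⟩
    set k := Nat.find hSp with hkdef
    obtain ⟨hk2, a, hper, hedge⟩ := Nat.find_spec hSp
    have hmin : ∀ m, m < k → ¬ S m := fun m hm => Nat.find_min hSp hm
    have hkpos : 0 < k := by omega
    have haux : ∀ (q s : ℕ), a (s + q * k) = a s := by
      intro q
      induction q with
      | zero => simp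
      | succ q ihq =>
        intro s
        have h1 : s + (q + 1) * k = (s + q * k) + k := by ring
        rw [h1, hper, ihq]
    have amod : ∀ t, a t = a (t % k) := by
      intro t
      conv_lhs => rw [← Nat.mod_add_div t k, mul_comm]
      exact haux _ _
    have hinj : ∀ s t, s < k → t < k → a s = a t → s = t := by
      suffices hsuff : ∀ s t, s < t → t < k → a s = a t → False by
        intro s t hs ht heq
        rcases lt_trichotomy s t with h | h | h
        · exact (hsuff s t h ht heq).elim
        · exact h
        · exact (hsuff t s h hs heq.symm).elim
      intro s t hst htk heq
      set d := t - s with hd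
      have hd1 : 1 ≤ d := by omega
      rcases eq_or_lt_of_le hd1 with hd1' | hd1'
      · have : t = s + 1 := by omega
        exact (hedge s).1 (by rw [← this, heq])
      · have hd2 : 2 ≤ d := by omega
        apply hmin d (by omega)
        refine ⟨hd2, fun u => a (s + u % d), fun u => by simp [Nat.add_mod_right], ?_⟩
        intro u
        show a (s + u % d) ≠ a (s + (u + 1) % d) ∧ eF (a (s + u % d)) ∈ (pF (a (s + (u + 1) % d))).edges
        have hmlt : u % d < d := Nat.mod_lt _ (by omega)
        rcases Nat.lt_or_ge (u % d) (d - 1) with hc | hc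
        · have h1 : (u + 1) % d = u % d + 1 := jl_mod_succ hd2 hc
          rw [h1]
          have e1 : s + (u % d + 1) = (s + u % d) + 1 := by omega
          rw [e1]
          exact hedge (s + u % d)
        · have hmeq : u % d = d - 1 := by omega
          have h1 : (u + 1) % d = 0 := jl_mod_succ_zero hd2 hmeq
          rw [hmeq, h1, Nat.add_zero]
          have e1 : s + (d - 1) = t - 1 := by omega
          have e2 : t - 1 + 1 = t := by omega
          have h := hedge (t - 1)
          rw [e2, ← heq] at h
          rw [e1]
          exact h
    -- no chords
    have hchord : ∀ i' j', i' < k → j' < k → eF (a i') ∈ (pF (a j')).edges →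
        j' = i' ∨ j' = (i' + 1) % k := by
      intro i' j' hi hj hmem
      by_contra hcon
      push_neg at hcon
      obtain ⟨hne1, hne2⟩ := hcon
      have hsucc : (i' + 1) % k = if i' + 1 = k then 0 else i' + 1 := by
        split_ifs with hh
        · rw [hh, Nat.mod_self]
        · exact Nat.mod_eq_of_lt (by omega)
      have hne2a : i' + 1 = k → j' ≠ 0 := by
        intro hh
        rw [hsucc, if_pos hh] at hne2
        exact hne2
      have hne2b : i' + 1 < k → j' ≠ i' + 1 := by
        intro hh
        rw [hsucc, if_neg (by omega)] at hne2
        exact hne2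
      obtain ⟨m, hm1, hmlt, hmeq⟩ : ∃ m, 1 ≤ m ∧ m ≤ k - 2 ∧
          (j' + m = i' ∨ j' + m = i' + k) := by
        rcases le_or_gt j' i' with hji | hji
        · refine ⟨i' - j', by omega, ?_, Or.inl (by omega)⟩
          rcases Nat.lt_or_ge (i' + 1) k with hh | hh
          · omega
          · have h1 : i' + 1 = k := by omega
            have h2 := hne2a h1
            omega
        · refine ⟨i' + k - j', by omega, ?_, Or.inr (by omega)⟩
          rcases Nat.lt_or_ge (i' + 1) k with hh | hh
          · have h2 := hne2b hh
            omega
          · have h1 : i' + 1 = k := by omega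
            omega
      have hjm : (j' + m) % k = i' := by
        rcases hmeq with h | h
        · rw [h]; exact Nat.mod_eq_of_lt hi
        · rw [h, Nat.add_mod_right]
          exact Nat.mod_eq_of_lt hi
      set d := m + 1 with hddef
      have hd2 : 2 ≤ d := by omega
      have hdk : d < k := by omega
      apply hmin d hdk
      refine ⟨hd2, fun u => a ((j' + u % d) % k), fun u => by simp [Nat.add_mod_right], ?_⟩
      intro u
      show a ((j' + u % d) % k) ≠ a ((j' + (u + 1) % d) % k) ∧
        eF (a ((j' + u % d) % k)) ∈ (pF (a ((j' + (u + 1) % d) % k))).edges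
      have hmltd : u % d < d := Nat.mod_lt _ (by omega)
      rcases Nat.lt_or_ge (u % d) (d - 1) with hc | hc
      · have h1 : (u + 1) % d = u % d + 1 := jl_mod_succ hd2 hc
        rw [h1]
        have h := hedge (j' + u % d)
        have e1 : j' + (u % d + 1) = (j' + u % d) + 1 := by omega
        rw [e1]
        rw [← amod (j' + u % d), ← amod ((j' + u % d) + 1)]
        exact h
      · have hmeq2 : u % d = d - 1 := by omega
        have h1 : (u + 1) % d = 0 := jl_mod_succ_zero hd2 hmeq2
        rw [hmeq2, h1, Nat.add_zero]
        have e1 : d - 1 = m := by omega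
        rw [e1, hjm, Nat.mod_eq_of_lt hj]
        refine ⟨?_, hmem⟩
        intro hh
        exact hne1 (hinj i' j' hi hj hh).symm
    -- Step F : the symmetric difference and the final contradiction
    set cnt : Sym2 V → ℕ := fun g =>
      ((Finset.range k).filter (fun t => g ∈ (fF (a t) :: (pF (a t)).edges))).card with hcnt
    set Δ : Finset (Sym2 V) := G.edgeFinset.filter (fun g => Odd (cnt g)) with hΔ
    have hCsubE : ∀ b : Fin (Fintype.card V - 1),
        ∀ g ∈ (fF b :: (pF b).edges), g ∈ G.edgeFinset := by
      intro b g hg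
      rcases List.mem_cons.mp hg with rfl | h
      · exact (hfprop b).1
      · exact hTmemE _ (hsubT b g h)
    -- casting parity helper
    have hcast : ∀ n : ℕ, ((if Odd n then 1 else 0 : ℕ) : ZMod 2) = (n : ZMod 2) := by
      intro n
      have h2 : (n : ZMod 2) = ((n % 2 : ℕ) : ZMod 2) := (ZMod.natCast_mod n 2).symm
      rcases Nat.even_or_odd n with h | h
      · rw [if_neg (by simpa [Nat.odd_iff] using Nat.even_iff.mp h), h2, Nat.even_iff.mp h]
      · rw [if_pos h, h2, Nat.odd_iff.mp h]
    have hzero : ∀ n : ℕ, Even n → (n : ZMod 2) = 0 := by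
      intro n hn
      rw [ZMod.natCast_eq_zero_iff]
      exact hn.two_dvd
    have hofzero : ∀ n : ℕ, (n : ZMod 2) = 0 → Even n := by
      intro n hn
      rw [ZMod.natCast_eq_zero_iff] at hn
      obtain ⟨c, hc⟩ := hn; exact ⟨c, by omega⟩
    -- Δ1 : Δ is nonempty
    have hfa0cnt : cnt (fF (a 0)) = 1 := by
      rw [hcnt]
      simp only
      have hset : (Finset.range k).filter (fun t => fF (a 0) ∈ (fF (a t) :: (pF (a t)).edges))
          = {0} := by
        ext t
        rw [Finset.mem_filter, Finset.mem_range, Finset.mem_singleton]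
        constructor
        · rintro ⟨htk, hmem⟩
          rcases List.mem_cons.mp hmem with h | h
          · exact (hinj t 0 htk (by omega) (hfinj h.symm)).symm ▸ rfl
          · exact absurd (hsubT _ _ h) (hfnotT _)
        · rintro rfl
          exact ⟨by omega, List.mem_cons_self⟩
      rw [hset, Finset.card_singleton]
    have hΔne : Δ.Nonempty := by
      refine ⟨fF (a 0), ?_⟩
      rw [hΔ, Finset.mem_filter]
      exact ⟨(hfprop _).1, by rw [hfa0cnt]; exact odd_one⟩
    have hΔsubE : ∀ g ∈ Δ, g ∈ G.edgeFinset := fun g hg => (Finset.mem_filter.mp hg).1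
    -- Δ2 : every vertex meets Δ in an even number of edges
    have heven : ∀ v : V, Even ((Δ.filter (fun g => v ∈ g)).card) := by
      intro v
      apply hofzero
      have hstep1 : Δ.filter (fun g => v ∈ g)
          = (G.edgeFinset.filter (fun g => v ∈ g)).filter (fun g => Odd (cnt g)) := by
        rw [hΔ, Finset.filter_filter, Finset.filter_filter]
        apply Finset.filter_congr
        intro g _
        simp [and_comm]
      rw [hstep1, Finset.card_filter]
      rw [Nat.cast_sum]
      have hstep2 : ∀ g ∈ G.edgeFinset.filter (fun g => v ∈ g),
          ((if Odd (cnt g) then 1 else 0 : ℕ) : ZMod 2) = ((cnt g : ℕ) : ZMod 2) :=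
        fun g _ => hcast (cnt g)
      rw [Finset.sum_congr rfl hstep2]
      have hstep3 : (∑ g ∈ G.edgeFinset.filter (fun g => v ∈ g), ((cnt g : ℕ) : ZMod 2))
          = ((∑ g ∈ G.edgeFinset.filter (fun g => v ∈ g), cnt g : ℕ) : ZMod 2) := by
        rw [Nat.cast_sum]
      rw [hstep3]
      have hstep4 : ∑ g ∈ G.edgeFinset.filter (fun g => v ∈ g), cnt g
          = ∑ t ∈ Finset.range k,
              ((G.edgeFinset.filter (fun g => v ∈ g)).filter
                (fun g => g ∈ (fF (a t) :: (pF (a t)).edges))).card := by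
        have : ∀ g, cnt g = ∑ t ∈ Finset.range k,
            (if g ∈ (fF (a t) :: (pF (a t)).edges) then 1 else 0) := by
          intro g
          rw [hcnt]
          exact Finset.card_filter _ _
        rw [Finset.sum_congr rfl (fun g _ => this g), Finset.sum_comm]
        apply Finset.sum_congr rfl
        intro t _
        rw [Finset.card_filter]
      rw [hstep4, Nat.cast_sum]
      apply Finset.sum_eq_zero
      intro t _
      apply hzero
      have hsetC : (G.edgeFinset.filter (fun g => v ∈ g)).filter
            (fun g => g ∈ (fF (a t) :: (pF (a t)).edges))
          = ((fF (a t) :: (pF (a t)).edges).toFinset).filter (fun g => v ∈ g) := by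
        ext g
        simp only [Finset.mem_filter, List.mem_toFinset]
        constructor
        · rintro ⟨⟨hgE, hgv⟩, hgC⟩
          exact ⟨hgC, hgv⟩
        · rintro ⟨hgC, hgv⟩
          exact ⟨⟨hCsubE _ _ hgC, hgv⟩, hgC⟩
      rw [hsetC]
      have hfilt : ((fF (a t) :: (pF (a t)).edges).toFinset).filter (fun g => v ∈ g)
          = ((fF (a t) :: (pF (a t)).edges).filter (fun g => decide (v ∈ g))).toFinset := by
        rw [List.toFinset_filter]
        apply Finset.filter_congr
        intro g _
        simp
      rw [hfilt, List.toFinset_card_of_nodup ((hCnodup (a t)).filter _),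
        ← List.countP_eq_length_filter]
      exact hCparity (a t) v
    -- Δ3 : extract a cycle from Δ and derive the contradiction
    have hnotacyc : ¬ (SimpleGraph.fromEdgeSet (↑Δ : Set (Sym2 V))).IsAcyclic := by
      intro hacyc
      obtain ⟨v, hv⟩ := jl_exists_leaf
        (fun g hg => SimpleGraph.not_isDiag_of_mem_edgeFinset (hΔsubE g hg)) hacyc hΔne
      have hev := heven v
      rw [hv] at hev
      simp at hev
    have hex : ∃ (v : V) (c : (SimpleGraph.fromEdgeSet (↑Δ : Set (Sym2 V))).Walk v v),
        c.IsCycle := by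
      by_contra hcon
      push_neg at hcon
      exact hnotacyc (fun v c hc => hcon v c hc)
    obtain ⟨v, c, hc⟩ := hex
    have hce : ∀ g ∈ c.edges, g ∈ Δ := by
      intro g hg
      have h7 := c.edges_subset_edgeSet hg
      rw [SimpleGraph.edgeSet_fromEdgeSet] at h7
      exact_mod_cast h7.1
    set cG := c.transfer G (fun g hg => SimpleGraph.mem_edgeFinset.mp (hΔsubE _ (hce g hg)))
      with hcGdef
    have hcGcyc : cG.IsCycle := hc.transfer _
    have hcGedges : cG.edges = c.edges := c.edges_transfer _
    have hnotinj2 : ¬ Set.InjOn φ {e | e ∈ cG.edges} := fun hrb => hnrc ⟨v, cG, hcGcyc, hrb⟩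
    have hpair3 : ∃ g1 ∈ cG.edges, ∃ g2 ∈ cG.edges, φ g1 = φ g2 ∧ g1 ≠ g2 := by
      by_contra hcon
      push_neg at hcon
      exact hnotinj2 (fun g1 hg1 g2 hg2 heqq => hcon g1 hg1 g2 hg2 heqq)
    obtain ⟨g1, hg1, g2, hg2, hfeq, hne12⟩ := hpair3
    have hg1Δ : g1 ∈ Δ := hce _ (hcGedges ▸ hg1)
    have hg2Δ : g2 ∈ Δ := hce _ (hcGedges ▸ hg2)
    have hg1E := hΔsubE _ hg1Δ
    have hg2E := hΔsubE _ hg2Δ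
    have hboth : eF (φ g1) ∈ Δ ∧ fF (φ g1) ∈ Δ := by
      rcases hmemcl (φ g1) g1 hg1E rfl with h1 | h1 <;>
        rcases hmemcl (φ g1) g2 hg2E hfeq.symm with h2 | h2
      · exact absurd (h1.trans h2.symm) hne12
      · exact ⟨h1 ▸ hg1Δ, h2 ▸ hg2Δ⟩
      · exact ⟨h2 ▸ hg2Δ, h1 ▸ hg1Δ⟩
      · exact absurd (h1.trans h2.symm) hne12
    have hfodd : Odd (cnt (fF (φ g1))) := (Finset.mem_filter.mp hboth.2).2
    have hcntpos : ((Finset.range k).filter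
        (fun t => fF (φ g1) ∈ (fF (a t) :: (pF (a t)).edges))).Nonempty := by
      apply Finset.card_pos.mp
      rcases Nat.eq_zero_or_pos (cnt (fF (φ g1))) with h0 | h0
      · rw [h0] at hfodd
        simp at hfodd
      · exact h0
    obtain ⟨t, htmem⟩ := hcntpos
    rw [Finset.mem_filter, Finset.mem_range] at htmem
    obtain ⟨htk, htC⟩ := htmem
    have hta : a t = φ g1 := by
      rcases List.mem_cons.mp htC with h | h
      · exact (hfinj h).symm
      · exact absurd (hsubT _ _ h) (hfnotT _)
    have heΔ : eF (a t) ∈ Δ := by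
      rw [hta]
      exact hboth.1
    have heodd : Odd (cnt (eF (a t))) := (Finset.mem_filter.mp heΔ).2
    have hseteq : (Finset.range k).filter
          (fun t' => eF (a t) ∈ (fF (a t') :: (pF (a t')).edges))
        = {t, (t + 1) % k} := by
      ext t'
      rw [Finset.mem_filter, Finset.mem_range, Finset.mem_insert, Finset.mem_singleton]
      constructor
      · rintro ⟨ht'k, hmem⟩
        rcases List.mem_cons.mp hmem with h | h
        · exact absurd h (hcross _ _)
        · rcases hchord t t' htk ht'k h with h' | h'
          · exact Or.inl h'
          · exact Or.inr h'
      · rintro (rfl | rfl)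
        · exact ⟨htk, List.mem_cons_of_mem _ (heFin (a t'))⟩
        · refine ⟨Nat.mod_lt _ (by omega), ?_⟩
          apply List.mem_cons_of_mem
          have h6 : a ((t + 1) % k) = a (t + 1) := (amod (t + 1)).symm
          rw [h6]
          exact (hedge t).2
    have hmodne : t ≠ (t + 1) % k := by
      rcases Nat.lt_or_ge (t + 1) k with hh | hh
      · rw [Nat.mod_eq_of_lt hh]
        omega
      · have h8 : t + 1 = k := by omega
        rw [h8, Nat.mod_self]
        omega
    have hcnt2 : cnt (eF (a t)) = 2 := by
      show ((Finset.range k).filter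
        (fun t' => eF (a t) ∈ (fF (a t') :: (pF (a t')).edges))).card = 2
      rw [hseteq, Finset.card_insert_of_notMem (by
        rw [Finset.mem_singleton]; exact hmodne), Finset.card_singleton]
    rw [hcnt2] at heodd
    exact (by decide : ¬ Odd 2) heodd

end JLProofAux

/-- If `G` is a connected graph on `n` vertices with a JL-coloring `φ` and
`|E(G)| ≥ 2(n-1)`, then some color class has size exactly 1; consequently, for any
near-equal positive integers `a₁, …, a_{n-1}` (pairwise differing by at most 1, each `≥ 2`)
summing to `|E(G)|`, the bound `|R(G,φ)| ≤ ∏ aᵢ` is strict. -/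
theorem stmt_16 {V : Type*} [Fintype V] [DecidableEq V] (G : SimpleGraph V)
    [DecidableRel G.Adj] (hG : G.Connected)
    (φ : Sym2 V → Fin (Fintype.card V - 1)) (hφ : IsJLColoring G φ)
    (hE : 2 * (Fintype.card V - 1) ≤ G.edgeFinset.card) :
    (∃ c : Fin (Fintype.card V - 1),
        (G.edgeFinset.filter (fun e => φ e = c)).card = 1) ∧
      ∀ a : Fin (Fintype.card V - 1) → ℕ,
        (∀ i, 2 ≤ a i) → (∀ i j, a i ≤ a j + 1) → (∑ i, a i = G.edgeFinset.card) →
          numRST G φ < ∏ i, a i := by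
  classical
  have hV : Nonempty V := hG.nonempty
  have hcard1 : 1 ≤ Fintype.card V := Fintype.card_pos
  rcases Nat.lt_or_ge (Fintype.card V) 2 with hlt | hge
  · exfalso
    obtain ⟨v⟩ := hV
    have h0 : Fintype.card V - 1 = 0 := by omega
    exact (h0 ▸ φ (Sym2.diag v)).elim0
  · obtain ⟨c₀, hc₀⟩ := jl_main G.edgeFinset.card G inferInstance le_rfl hge hG φ hφ
    refine ⟨⟨c₀, hc₀⟩, ?_⟩
    intro aa ha2 hnear hsum
    have hle := jl_numRST_le G φ
    have hb : ∑ cc, (G.edgeFinset.filter (fun e => φ e = cc)).card = G.edgeFinset.card :=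
      (Finset.card_eq_sum_card_fiberwise (fun x _ => Finset.mem_univ (φ x))).symm
    have harith := jl_arith aa (fun cc => (G.edgeFinset.filter (fun e => φ e = cc)).card)
      ha2 hnear (by rw [hb, ← hsum]) c₀ hc₀
    exact lt_of_le_of_lt hle harith
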